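/- Let E be a finite set and let 𝓕 be a nonempty downward-closed family of subsets of E (if M ∈ 𝓕 and M' ⊆ M then M' ∈ 𝓕). Let M_1, …, M_m ∈ 𝓕, let λ_1, …, λ_m ≥ 0 with Σ_{j=1}^m λ_j = 1, and let y : E → ℝ satisfy 0 ≤ y_e ≤ Σ_{j : e ∈ M_j} λ_j for every e ∈ E. Then there exist finitely many sets N_1, …, N_p ∈ 𝓕 and weights λ'_1, …, λ'_p ≥ 0 with Σ_{j=1}^p λ'_j = 1 such that y_e = Σ_{j : e ∈ N_j} λ'_j for every e ∈ E. -/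

import Mathlib

open Finset

theorem aux_exact_decomp {E : Type*} [Fintype E] [DecidableEq E]
    (𝓕 : Set (Finset E))
    (hdc : ∀ M ∈ 𝓕, ∀ M' ⊆ M, M' ∈ 𝓕)
    (F : Finset E) :
    ∀ (ι : Type) [Fintype ι] (M : ι → Finset E), (∀ j, M j ∈ 𝓕) →
    ∀ (lam : ι → ℝ), (∀ j, 0 ≤ lam j) → (∑ j, lam j = 1) →
    ∀ (y : E → ℝ), (∀ e, 0 ≤ y e) →
    (∀ e, y e ≤ ∑ j ∈ univ.filter (fun j => e ∈ M j), lam j) →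
    (∀ e ∉ F, y e = ∑ j ∈ univ.filter (fun j => e ∈ M j), lam j) →
    ∃ (p : ℕ) (N : Fin p → Finset E) (lam' : Fin p → ℝ),
      (∀ j, N j ∈ 𝓕) ∧ (∀ j, 0 ≤ lam' j) ∧ (∑ j, lam' j = 1) ∧
      ∀ e, y e = ∑ j ∈ univ.filter (fun j => e ∈ N j), lam' j := by
  induction F using Finset.induction with
  | empty =>
    intro ι _ M hM lam h0 h1 y hy0 hy1 heq
    refine ⟨Fintype.card ι, M ∘ (Fintype.equivFin ι).symm,
      lam ∘ (Fintype.equivFin ι).symm, fun j => hM _, fun j => h0 _, ?_, ?_⟩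
    · exact (Equiv.sum_comp (Fintype.equivFin ι).symm lam).trans h1
    · intro f
      rw [heq f (notMem_empty f), sum_filter, sum_filter]
      exact (Equiv.sum_comp (Fintype.equivFin ι).symm
        (fun j => if f ∈ M j then lam j else 0)).symm
  | @insert e F he ih =>
    intro ι _ M hM lam h0 h1 y hy0 hy1 heq
    set S : ℝ := ∑ j ∈ univ.filter (fun j => e ∈ M j), lam j with hS
    set t : ℝ := y e / S with ht
    have hS0 : 0 ≤ S := Finset.sum_nonneg fun j _ => h0 j
    have ht0 : 0 ≤ t := div_nonneg (hy0 e) hS0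
    have ht1 : t ≤ 1 := by
      rcases eq_or_lt_of_le hS0 with h | h
      · rw [ht, ← h, div_zero]; exact zero_le_one
      · exact (div_le_one h).mpr (hy1 e)
    have htS : t * S = y e := by
      rcases eq_or_lt_of_le hS0 with h | h
      · have hye : y e = 0 := le_antisymm (by rw [h]; exact hy1 e) (hy0 e)
        rw [← h, mul_zero, hye]
      · rw [ht]; exact div_mul_cancel₀ _ h.ne'
    set N : ι ⊕ ι → Finset E := fun k => Sum.elim M (fun j => (M j).erase e) k with hN
    set lam' : ι ⊕ ι → ℝ := fun k =>
      Sum.elim (fun j => if e ∈ M j then t * lam j else lam j)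
        (fun j => if e ∈ M j then (1 - t) * lam j else 0) k with hlam'
    have hkey : ∀ f, ∑ k ∈ univ.filter (fun k => f ∈ N k), lam' k =
        if f = e then y e else ∑ j ∈ univ.filter (fun j => f ∈ M j), lam j := by
      intro f
      rw [sum_filter, Fintype.sum_sum_type]
      by_cases hf : f = e
      · rw [if_pos hf]
        have h2 : ∑ j : ι, (if f ∈ N (Sum.inr j) then lam' (Sum.inr j) else 0) = 0 :=
          Finset.sum_eq_zero fun j _ => by simp [hN, hf]
        have h3 : ∑ j : ι, (if f ∈ N (Sum.inl j) then lam' (Sum.inl j) else 0) = t * S := by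
          rw [hS, Finset.mul_sum, Finset.sum_filter]
          exact Finset.sum_congr rfl fun j _ => by
            by_cases hj : e ∈ M j <;> simp [hN, hlam', hf, hj]
        rw [h2, h3, add_zero, htS]
      · rw [if_neg hf, sum_filter, ← Finset.sum_add_distrib]
        refine Finset.sum_congr rfl fun j _ => ?_
        by_cases hj : f ∈ M j <;> by_cases hj2 : e ∈ M j <;>
          simp [hN, hlam', hj, hj2, hf] <;> ring
    have hle : ∀ f, y f ≤ ∑ k ∈ univ.filter (fun k => f ∈ N k), lam' k := by
      intro f; rw [hkey f]
      by_cases hf : f = e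
      · simp [hf]
      · simpa [hf] using hy1 f
    have heq' : ∀ f ∉ F, y f = ∑ k ∈ univ.filter (fun k => f ∈ N k), lam' k := by
      intro f hf; rw [hkey f]
      by_cases hfe : f = e
      · simp [hfe]
      · rw [if_neg hfe]
        exact heq f (by simp [hfe, hf])
    have hsum : ∑ k, lam' k = 1 := by
      rw [Fintype.sum_sum_type, ← Finset.sum_add_distrib, ← h1]
      refine Finset.sum_congr rfl fun j _ => ?_
      by_cases hj : e ∈ M j <;> simp [hlam', hj] <;> ring
    exact ih (ι ⊕ ι) N (fun k => by
        cases k with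
        | inl j => exact hM j
        | inr j => exact hdc (M j) (hM j) _ (erase_subset _ _))
      lam' (fun k => by
        cases k with
        | inl j => by_cases hj : e ∈ M j <;>
            simp [hlam', hj, mul_nonneg ht0 (h0 j), h0 j]
        | inr j => by_cases hj : e ∈ M j <;>
            simp [hlam', hj, mul_nonneg (by linarith : (0:ℝ) ≤ 1 - t) (h0 j)])
      hsum y hy0 hle heq'

theorem exact_decomposition_of_dominating
    {E : Type*} [Fintype E] [DecidableEq E]
    (𝓕 : Set (Finset E)) (h𝓕 : 𝓕.Nonempty)
    (hdc : ∀ M ∈ 𝓕, ∀ M' ⊆ M, M' ∈ 𝓕)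
    (m : ℕ) (M : Fin m → Finset E) (hM : ∀ j, M j ∈ 𝓕)
    (lam : Fin m → ℝ) (hlam0 : ∀ j, 0 ≤ lam j) (hlam1 : ∑ j, lam j = 1)
    (y : E → ℝ)
    (hy0 : ∀ e, 0 ≤ y e)
    (hy1 : ∀ e, y e ≤ ∑ j ∈ univ.filter (fun j => e ∈ M j), lam j) :
    ∃ (p : ℕ) (N : Fin p → Finset E) (lam' : Fin p → ℝ),
      (∀ j, N j ∈ 𝓕) ∧ (∀ j, 0 ≤ lam' j) ∧ (∑ j, lam' j = 1) ∧
      ∀ e, y e = ∑ j ∈ univ.filter (fun j => e ∈ N j), lam' j := by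
  exact aux_exact_decomp 𝓕 hdc Finset.univ (Fin m) M hM lam hlam0 hlam1 y hy0 hy1
    (fun e h => absurd (mem_univ e) h)
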